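/- Let T be a rooted tree and let d_i be the rational functions defined recursively by d_i(x) = x - Σ_{j child of i} 1/d_j(x) (with d_i(x) = x for leaves). Then for every θ that is not a pole of any d_j involved in the recursion for d_i, the derivative satisfies d_i'(θ) ≥ 1. -/

import Mathlib

open Finset

/-- The Jacobs–Trevisan function of vertex `i` of a rooted tree on `Fin n`
given by a parent map (root `0`, `parent j < j` for `j ≠ 0`), evaluated at a
real number:
`d i θ = θ - ∑_{j child of i} (d j θ)⁻¹` (with `(0 : ℝ)⁻¹ = 0` by convention). -/
noncomputable def dReal (n : ℕ) (parent : Fin n → Fin n) (i : Fin n) (θ : ℝ) : ℝ :=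
  θ - ∑ j ∈ (Finset.univ.filter fun j => parent j = i ∧ i < j).attach,
      (dReal n parent j.1 θ)⁻¹
termination_by n - i.1
decreasing_by
  have hj := j.2
  simp only [Finset.mem_filter, Finset.mem_univ, true_and] at hj
  have := j.1.isLt
  omega

/-- `j` is a descendant of `i` (possibly `j = i`): some iterate of the parent
map sends `j` to `i`. -/
def Desc (n : ℕ) (parent : Fin n → Fin n) (i j : Fin n) : Prop :=
  ∃ k ∈ Finset.range (n + 1), parent^[k] j = i

lemma parent_le {n : ℕ} (hn : 0 < n) (parent : Fin n → Fin n)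
    (hroot : parent ⟨0, hn⟩ = ⟨0, hn⟩)
    (hpar : ∀ j : Fin n, j ≠ ⟨0, hn⟩ → parent j < j) (j : Fin n) :
    parent j ≤ j := by
  by_cases h : j = ⟨0, hn⟩
  · rw [h, hroot]
  · exact le_of_lt (hpar j h)

lemma iter_le {n : ℕ} (hn : 0 < n) (parent : Fin n → Fin n)
    (hroot : parent ⟨0, hn⟩ = ⟨0, hn⟩)
    (hpar : ∀ j : Fin n, j ≠ ⟨0, hn⟩ → parent j < j) (m : ℕ) (j : Fin n) :
    parent^[m] j ≤ j := by
  induction m with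
  | zero => simp
  | succ m ih =>
    rw [Function.iterate_succ_apply']
    exact le_trans (parent_le hn parent hroot hpar _) ih

lemma iter_strict {n : ℕ} (hn : 0 < n) (parent : Fin n → Fin n)
    (hroot : parent ⟨0, hn⟩ = ⟨0, hn⟩)
    (hpar : ∀ j : Fin n, j ≠ ⟨0, hn⟩ → parent j < j) (m : ℕ) (j : Fin n)
    (h : parent^[m] j ≠ ⟨0, hn⟩) :
    (parent^[m] j).1 + m ≤ j.1 := by
  induction m with
  | zero => simp
  | succ m ih =>
    rw [Function.iterate_succ_apply'] at h ⊢
    have hx : parent^[m] j ≠ ⟨0, hn⟩ := by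
      intro he; rw [he, hroot] at h; exact h rfl
    have h1 := ih hx
    have h2 := hpar _ hx
    have := Fin.lt_iff_val_lt_val.mp h2
    omega

lemma desc_of_iter {n : ℕ} (hn : 0 < n) (parent : Fin n → Fin n)
    (hroot : parent ⟨0, hn⟩ = ⟨0, hn⟩)
    (hpar : ∀ j : Fin n, j ≠ ⟨0, hn⟩ → parent j < j) {i j : Fin n} (k : ℕ)
    (h : parent^[k] j = i) : Desc n parent i j := by
  by_cases hi : i = ⟨0, hn⟩
  · refine ⟨n, by simp, ?_⟩
    subst hi
    by_contra hc
    have := iter_strict hn parent hroot hpar n j hc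
    have := j.isLt
    omega
  · refine ⟨k, ?_, h⟩
    have := iter_strict hn parent hroot hpar k j (h ▸ hi)
    have := j.isLt
    simp only [Finset.mem_range]
    omega

/-- If `θ` is not a pole of any function involved in the recursion for `d i`
(no strict descendant `j` of `i` has `d j θ = 0`), then `d i` is differentiable
at `θ` with derivative at least `1`. -/
theorem dReal_deriv_ge_one (n : ℕ) (hn : 0 < n) (parent : Fin n → Fin n)
    (hroot : parent ⟨0, hn⟩ = ⟨0, hn⟩)
    (hpar : ∀ j : Fin n, j ≠ ⟨0, hn⟩ → parent j < j)
    (i : Fin n) (θ : ℝ)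
    (hnz : ∀ j : Fin n, Desc n parent i j → j ≠ i → dReal n parent j θ ≠ 0) :
    ∃ m : ℝ, 1 ≤ m ∧ HasDerivAt (fun t => dReal n parent i t) m θ := by
  suffices H : ∀ N : ℕ, ∀ i : Fin n, n - i.1 ≤ N →
      (∀ j : Fin n, Desc n parent i j → j ≠ i → dReal n parent j θ ≠ 0) →
      ∃ m : ℝ, 1 ≤ m ∧ HasDerivAt (fun t => dReal n parent i t) m θ by
    exact H n i (by omega) hnz
  intro N
  induction N with
  | zero => intro i hi; have := i.isLt; omega
  | succ N ih =>
    intro i hi hnz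
    set S := (Finset.univ.filter fun j => parent j = i ∧ i < j) with hS
    have key : ∀ j ∈ S.attach, ∃ m : ℝ, 1 ≤ m ∧
        HasDerivAt (fun t => dReal n parent j.1 t) m θ := by
      intro j _
      have hj := j.2
      simp only [hS, Finset.mem_filter, Finset.mem_univ, true_and] at hj
      refine ih j.1 ?_ ?_
      · have := j.1.isLt
        have := Fin.lt_iff_val_lt_val.mp hj.2
        omega
      · intro k hk hkj
        obtain ⟨m, _, hm⟩ := hk
        have hdi : Desc n parent i k := by
          apply desc_of_iter hn parent hroot hpar (m + 1)
          rw [Function.iterate_succ_apply', hm, hj.1]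
        have hki : k ≠ i := by
          intro he
          subst he
          have := iter_le hn parent hroot hpar m k
          rw [hm] at this
          exact absurd (lt_of_lt_of_le hj.2 this) (lt_irrefl _)
        exact hnz k hdi hki
    choose m hm1 hm2 using key
    refine ⟨1 + ∑ j ∈ S.attach, m j (Finset.mem_attach _ j) / (dReal n parent j.1 θ) ^ 2, ?_, ?_⟩
    · have : (0:ℝ) ≤ ∑ j ∈ S.attach, m j (Finset.mem_attach _ j) / (dReal n parent j.1 θ) ^ 2 := by
        apply Finset.sum_nonneg
        intro j hj
        exact div_nonneg (le_trans zero_le_one (hm1 j (Finset.mem_attach _ j))) (sq_nonneg _)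
      linarith
    · have hfun : (fun t => dReal n parent i t) =
          fun t => t - ∑ j ∈ S.attach, (dReal n parent j.1 t)⁻¹ := by
        funext t
        rw [dReal]
      rw [hfun]
      have hder : HasDerivAt
          (fun t => ∑ j ∈ S.attach, (dReal n parent j.1 t)⁻¹)
          (∑ j ∈ S.attach, -(m j (Finset.mem_attach _ j) / (dReal n parent j.1 θ) ^ 2)) θ := by
        apply HasDerivAt.fun_sum
        intro j hj
        have hj' := j.2
        simp only [hS, Finset.mem_filter, Finset.mem_univ, true_and] at hj'
        have hne : dReal n parent j.1 θ ≠ 0 := by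
          apply hnz j.1 _ (Fin.ne_of_gt hj'.2)
          exact desc_of_iter hn parent hroot hpar 1 (by simp [hj'.1])
        have := (hm2 j (Finset.mem_attach _ j)).inv hne
        exact this.congr_deriv (by ring)
      have := (hasDerivAt_id θ).fun_sub hder
      refine this.congr_deriv ?_
      rw [Finset.sum_neg_distrib]
      ring
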